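/- For any deterministic assignment a_{i,x} ∈ {−1, +1} (for parties i = 1,…,N and settings x = 0,1,2) and any bit string l ∈ {0,1}^N, the classical value of the Bell expression I_l, obtained by replacing each observable A_{i,x} by a_{i,x} in I_l = (−1)^{l_1}(N−1)·((a_{1,0}+a_{1,1})/√2)·∏_{i=2}^N a_{i,1} + Σ_{i=2}^N (−1)^{l_i}·((a_{1,0}−a_{1,1})/√2)·a_{i,0} − Σ_{i=2}^N (−1)^{l_1+l_i} a_{1,2} a_{i,2} ∏_{j=2,j≠i}^N a_{j,1}, is at most (√2 + 1)(N − 1). -/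

import Mathlib

open BigOperators Finset

/-- Classical bound of the Bell expression `I_l`: for deterministic `±1` assignments
`a i x` (parties indexed by `Fin (K+2)`, i.e. `N = K+2 ≥ 2` parties, party `1` being
index `0`; settings `x = 0,1,2`) and any bit string `l`, the classical value is at most
`(√2 + 1)(N − 1)`. -/
theorem classical_bound_Il (K : ℕ) (a : Fin (K + 2) → Fin 3 → ℝ)
    (ha : ∀ i x, a i x = 1 ∨ a i x = -1) (l : Fin (K + 2) → Fin 2) :
    (-1 : ℝ) ^ ((l 0 : ℕ)) * (K + 1) * ((a 0 0 + a 0 1) / Real.sqrt 2) *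
        (∏ i ∈ univ.erase 0, a i 1)
      + (∑ i ∈ univ.erase 0, (-1 : ℝ) ^ ((l i : ℕ)) * ((a 0 0 - a 0 1) / Real.sqrt 2) * a i 0)
      - (∑ i ∈ univ.erase 0, (-1 : ℝ) ^ ((l 0 : ℕ) + (l i : ℕ)) * a 0 2 * a i 2 *
          ∏ j ∈ (univ.erase 0).erase i, a j 1)
      ≤ (Real.sqrt 2 + 1) * (K + 1) := by
  have habs : ∀ i x, |a i x| = 1 := by
    intro i x; rcases ha i x with h | h <;> simp [h]
  have hs2 : (0:ℝ) < Real.sqrt 2 := by positivity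
  have hsd : |a 0 0 + a 0 1| + |a 0 0 - a 0 1| = 2 := by
    rcases ha 0 0 with h0 | h0 <;> rcases ha 0 1 with h1 | h1 <;>
      rw [h0, h1] <;> norm_num
  have hcard : (univ.erase (0 : Fin (K+2))).card = K + 1 := by
    simp [Finset.card_erase_of_mem]
  have hsgn : ∀ (n : ℕ), |(-1 : ℝ)^n| = 1 := fun n => by
    rw [abs_pow]; simp
  have hP : ∀ (s : Finset (Fin (K+2))) (x : Fin 3), |∏ i ∈ s, a i x| = 1 := by
    intro s x
    rw [Finset.abs_prod]
    exact Finset.prod_eq_one (fun i _ => habs i x)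
  set t1 := (-1 : ℝ) ^ ((l 0 : ℕ)) * (K + 1) * ((a 0 0 + a 0 1) / Real.sqrt 2) *
        (∏ i ∈ univ.erase 0, a i 1) with ht1
  set t2 := (∑ i ∈ univ.erase 0, (-1 : ℝ) ^ ((l i : ℕ)) * ((a 0 0 - a 0 1) / Real.sqrt 2) * a i 0) with ht2
  set t3 := (∑ i ∈ univ.erase 0, (-1 : ℝ) ^ ((l 0 : ℕ) + (l i : ℕ)) * a 0 2 * a i 2 *
          ∏ j ∈ (univ.erase 0).erase i, a j 1) with ht3
  have h1 : |t1| = (K + 1) * (|a 0 0 + a 0 1| / Real.sqrt 2) := by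
    rw [ht1, abs_mul, abs_mul, abs_mul, hsgn, hP, abs_div,
      abs_of_nonneg (Real.sqrt_nonneg 2)]
    have : |((K:ℝ) + 1)| = (K:ℝ) + 1 := abs_of_nonneg (by positivity)
    rw [this]; ring
  have h2 : |t2| ≤ (K + 1) * (|a 0 0 - a 0 1| / Real.sqrt 2) := by
    calc |t2| ≤ ∑ i ∈ univ.erase 0, |(-1 : ℝ) ^ ((l i : ℕ)) * ((a 0 0 - a 0 1) / Real.sqrt 2) * a i 0| :=
          Finset.abs_sum_le_sum_abs _ _
      _ = ∑ i ∈ univ.erase (0 : Fin (K+2)), |a 0 0 - a 0 1| / Real.sqrt 2 := by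
          refine Finset.sum_congr rfl fun i _ => ?_
          rw [abs_mul, abs_mul, hsgn, habs, abs_div, abs_of_nonneg (Real.sqrt_nonneg 2)]; ring
      _ = (K + 1) * (|a 0 0 - a 0 1| / Real.sqrt 2) := by
          rw [Finset.sum_const, hcard]; ring
  have h3 : |t3| ≤ (K + 1) := by
    calc |t3| ≤ ∑ i ∈ univ.erase 0, |(-1 : ℝ) ^ ((l 0 : ℕ) + (l i : ℕ)) * a 0 2 * a i 2 *
          ∏ j ∈ (univ.erase 0).erase i, a j 1| := Finset.abs_sum_le_sum_abs _ _
      _ = ∑ _i ∈ univ.erase (0 : Fin (K+2)), (1:ℝ) := by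
          refine Finset.sum_congr rfl fun i _ => ?_
          rw [abs_mul, abs_mul, abs_mul, hsgn, habs, habs, hP]; ring
      _ = (K + 1) := by rw [Finset.sum_const, hcard]; ring
  have key : t1 + t2 - t3 ≤ |t1| + |t2| + |t3| := by
    have := le_abs_self t1
    have := le_abs_self t2
    have := neg_abs_le t3
    linarith
  have hsum : |t1| + |t2| + |t3| ≤ (K + 1) * 2 / Real.sqrt 2 + (K + 1) := by
    rw [h1]
    have : (K + 1 : ℝ) * (|a 0 0 + a 0 1| / Real.sqrt 2) +
        (K + 1) * (|a 0 0 - a 0 1| / Real.sqrt 2) = (K+1) * 2 / Real.sqrt 2 := by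
      field_simp
      nlinarith [hsd]
    linarith
  have h2sqrt : (K + 1 : ℝ) * 2 / Real.sqrt 2 = Real.sqrt 2 * (K + 1) := by
    have : Real.sqrt 2 * Real.sqrt 2 = 2 := Real.mul_self_sqrt (by norm_num)
    field_simp
    nlinarith [this]
  calc t1 + t2 - t3 ≤ |t1| + |t2| + |t3| := key
    _ ≤ (K + 1) * 2 / Real.sqrt 2 + (K + 1) := hsum
    _ = (Real.sqrt 2 + 1) * (K + 1) := by rw [h2sqrt]; ring
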